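/- Let π = (π_1, …, π_k) be a permutation of {1, …, k}. Then: (i) if S(π) = 0 and π_1 is even, then S'(π) = −1; (ii) if S(π) = 0 and π_1 is odd, then S'(π⁺) = 0; (iii) if S(π) = 1 and π_1 is even, then S'(π) = 0; (iv) if S(π) = 1 and π_1 is odd, then S'(π⁺) = −1. -/

import Mathlib

/-- Parity sign: `1` for even integers, `-1` for odd integers. -/
def pSign (x : ℤ) : ℤ := if Even x then 1 else -1

/-- Local cost `C_{xy} = δ_{xy} − ((p_x p_y + 1)/2)·sgn(x−y)·p_x`. -/
def locCost (x y : ℤ) : ℤ :=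
  (if x = y then 1 else 0) - ((pSign x * pSign y + 1) / 2) * (x - y).sign * pSign x

/-- Sum of local costs over consecutive pairs of the sequence. -/
def pairCostSum (l : List ℤ) : ℤ := ((l.zip l.tail).map fun q => locCost q.1 q.2).sum

/-- Score `S(σ) = (1 + p_{σ₁})/2 + Σ_{i=1}^{k-1} C_{σ_i σ_{i+1}}`. -/
def score (l : List ℤ) : ℤ := (1 + pSign (l.headD 0)) / 2 + pairCostSum l

/-- Circular score `S^c(σ) = Σ_{i=1}^{k} C_{σ_i, σ_{(i mod k)+1}}` (indices cyclic). -/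
def cscore (l : List ℤ) : ℤ := ((l.zip (l.rotate 1)).map fun q => locCost q.1 q.2).sum

/-- Shifted score `S'(σ) = (1 − p_{σ₁})/2 + Σ_{i=1}^{k−1} C_{σ_i σ_{i+1}}`
(the score of placing `σ` shifted one run to the right in the zigzag word). -/
def scoreShift (l : List ℤ) : ℤ := (1 - pSign (l.headD 0)) / 2 + pairCostSum l

/-- Conditional relations for the shifted score of a permutation `π` of `{1, …, k}`:
(i) `S(π) = 0`, `π₁` even ⟹ `S'(π) = −1`; (ii) `S(π) = 0`, `π₁` odd ⟹ `S'(π⁺) = 0`;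
(iii) `S(π) = 1`, `π₁` even ⟹ `S'(π) = 0`; (iv) `S(π) = 1`, `π₁` odd ⟹ `S'(π⁺) = −1`. -/

lemma locCost_succ (x y : ℤ) (h : x ≠ y) : locCost (x+1) (y+1) = - locCost x y := by
  have hxy : ¬ (x + 1 = y + 1) := by omega
  have hs : (x + 1 - (y + 1)).sign = (x - y).sign := by ring_nf
  unfold locCost pSign
  rcases Int.even_or_odd x with hx | hx <;> rcases Int.even_or_odd y with hy | hy
  · simp [hx, hy, Int.even_add_one, Int.not_even_iff_odd.2 hx.add_one,
      Int.not_even_iff_odd.2 hy.add_one, h, hxy, hs]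
  · simp [hx, Int.not_even_iff_odd.2 hy, Int.not_even_iff_odd.2 hx.add_one,
      hy.add_one, h, hxy, hs]
  · simp [hy, Int.not_even_iff_odd.2 hx, Int.not_even_iff_odd.2 hy.add_one,
      hx.add_one, h, hxy, hs]
  · simp [Int.not_even_iff_odd.2 hx, Int.not_even_iff_odd.2 hy,
      hx.add_one, hy.add_one, h, hxy, hs]

lemma pairCostSum_nil : pairCostSum [] = 0 := rfl
lemma pairCostSum_single (a : ℤ) : pairCostSum [a] = 0 := rfl
lemma pairCostSum_cons (a b : ℤ) (t : List ℤ) :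
    pairCostSum (a :: b :: t) = locCost a b + pairCostSum (b :: t) := by
  simp [pairCostSum]

lemma pairCostSum_map_succ : ∀ l : List ℤ, l.Nodup →
    pairCostSum (l.map (· + 1)) = - pairCostSum l
  | [], _ => rfl
  | [a], _ => rfl
  | a :: b :: t, h => by
    have hab : a ≠ b := by
      intro e; exact (List.nodup_cons.1 h).1 (e ▸ (List.mem_cons_self : b ∈ b :: t))
    have ht := (List.nodup_cons.1 h).2
    have ih := pairCostSum_map_succ (b :: t) ht
    simp only [List.map_cons] at ih ⊢
    rw [pairCostSum_cons, pairCostSum_cons, ih, locCost_succ a b hab]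
    ring

lemma coeM_list_eq (L : List ℕ) : ((do let a ← L; pure ((a:ℤ))) : List ℤ) = L.map Nat.cast := by
  induction L with
  | nil => rfl
  | cons a t ih => simpa using ih

theorem scoreShift_cases (k : ℕ) (l : List ℤ)
    (hl : l.Perm ((List.range k).map fun i => (i : ℤ) + 1)) :
    (score l = 0 → Even (l.headD 0) → scoreShift l = -1) ∧
    (score l = 0 → Odd (l.headD 0) → scoreShift (l.map (· + 1)) = 0) ∧
    (score l = 1 → Even (l.headD 0) → scoreShift l = 0) ∧
    (score l = 1 → Odd (l.headD 0) → scoreShift (l.map (· + 1)) = -1) := by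
  have hnd : l.Nodup := by
    refine hl.nodup_iff.2 ?_
    refine List.Nodup.map (fun a b h => by omega) ?_
    rw [coeM_list_eq]
    exact List.Nodup.map (fun a b h => by exact_mod_cast h) (List.nodup_range : (List.range k).Nodup)
  refine ⟨?_, ?_, ?_, ?_⟩ <;> intro hs hp
  · have : pSign (l.headD 0) = 1 := by unfold pSign; exact if_pos hp
    unfold score at hs; unfold scoreShift
    rw [this] at hs ⊢; omega
  · obtain ⟨a, t, rfl⟩ : ∃ a t, l = a :: t := by
      cases l with
      | nil => simp at hp
      | cons a t => exact ⟨a, t, rfl⟩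
    have h1 : pSign ((a :: t).headD 0) = -1 := by
      simp [pSign, Int.not_even_iff_odd.2 (by simpa using hp)]
    have h2 : pSign (((a :: t).map (· + 1)).headD 0) = 1 := by
      simp [pSign, Odd.add_one (by simpa using hp)]
    unfold score at hs; unfold scoreShift
    rw [h1] at hs; rw [h2, pairCostSum_map_succ _ hnd]; omega
  · have : pSign (l.headD 0) = 1 := by unfold pSign; exact if_pos hp
    unfold score at hs; unfold scoreShift
    rw [this] at hs ⊢; omega
  · obtain ⟨a, t, rfl⟩ : ∃ a t, l = a :: t := by
      cases l with
      | nil => simp at hp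
      | cons a t => exact ⟨a, t, rfl⟩
    have h1 : pSign ((a :: t).headD 0) = -1 := by
      simp [pSign, Int.not_even_iff_odd.2 (by simpa using hp)]
    have h2 : pSign (((a :: t).map (· + 1)).headD 0) = 1 := by
      simp [pSign, Odd.add_one (by simpa using hp)]
    unfold score at hs; unfold scoreShift
    rw [h1] at hs; rw [h2, pairCostSum_map_succ _ hnd]; omega
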